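/- For every natural number n, the sum over k = 0..n of C(n,k)^2 · C(n+k,k) · C(2k,n) equals the double sum over k = 0..n and l = 0..n of C(n,k)^2 · C(n,l)^2 · C(k+l,n). (This is the equality of the two expressions for A_n/C(2n,n) in case #26 of the table.) -/

import Mathlib

open Finset


/-- Vandermonde in range form. -/
lemma vand_range (p q t : ℕ) :
    ∑ i ∈ range (t + 1), p.choose i * q.choose (t - i) = (p + q).choose t := by
  rw [Nat.add_choose_eq, Finset.Nat.sum_antidiagonal_eq_sum_range_succ_mk]

/-- Truncation-safe subset-chain identity. -/
lemma chain (n m j : ℕ) (hm : m ≤ n) :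
    n.choose (n - m) * (n - m).choose j = n.choose j * (n - j).choose m := by
  by_cases hj : j ≤ n - m
  · have h1 : n - m ≤ n := Nat.sub_le n m
    rw [Nat.choose_mul (n := n) hj]
    congr 1
    have : n - m - j = n - j - m := by omega
    rw [this]
    exact Nat.choose_symm (by omega)
  · push_neg at hj
    rw [Nat.choose_eq_zero_of_lt hj, Nat.mul_zero]
    by_cases hjn : j ≤ n
    · rw [Nat.choose_eq_zero_of_lt (show n - j < m by omega), Nat.mul_zero]
    · rw [Nat.choose_eq_zero_of_lt (by omega), Nat.zero_mul]

/-- Per-term telescoping certificate for Pfaff–Saalschütz. -/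
lemma T1 (a b x m : ℕ) :
    (x+1)^2 * (a.choose m * b.choose m * (x+1+a+b-m).choose (a+b))
      + (m+1)^2 * (a.choose (m+1) * b.choose (m+1) * (x+a+b-m).choose (a+b))
    = (x+a+1)*(x+b+1) * (a.choose m * b.choose m * (x+a+b-m).choose (a+b))
      + m^2 * (a.choose m * b.choose m * (x+1+a+b-m).choose (a+b)) := by
  rcases Nat.lt_or_ge a m with ha | ha
  · rw [Nat.choose_eq_zero_of_lt ha, Nat.choose_eq_zero_of_lt (by omega : a < m+1)]
    ring
  rcases Nat.lt_or_ge b m with hb | hb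
  · rw [Nat.choose_eq_zero_of_lt hb, Nat.choose_eq_zero_of_lt (by omega : b < m+1)]
    ring
  rcases Nat.lt_or_ge (x+1) m with hx2 | hx1
  · -- m ≥ x+2 : all binomials with top < a+b vanish
    rw [Nat.choose_eq_zero_of_lt (show x+1+a+b-m < a+b by omega),
        Nat.choose_eq_zero_of_lt (show x+a+b-m < a+b by omega)]
    ring
  rcases Nat.eq_or_lt_of_le hx1 with hxe | hx0
  · -- m = x+1
    rw [Nat.choose_eq_zero_of_lt (show x+a+b-m < a+b by omega), ← hxe]
    ring
  · -- main case m ≤ x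
    have hmx : m ≤ x := by omega
    have e1 := Nat.choose_succ_right_eq a m
    have e2 := Nat.choose_succ_right_eq b m
    have e3 := Nat.choose_mul_succ_eq (x+a+b-m) (a+b)
    have hrw : x+1+a+b-m = x+a+b-m+1 := by omega
    rw [hrw]
    zify [ha, hb, (show a+b ≤ x+a+b-m+1 by omega), (show m ≤ x+a+b by omega)] at e1 e2 e3 ⊢
    set u := (a.choose m : ℤ)
    set v := (b.choose m : ℤ)
    set U := (a.choose (m+1) : ℤ)
    set V := (b.choose (m+1) : ℤ)
    set w := ((x+a+b-m).choose (a+b) : ℤ)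
    set W := ((x+a+b-m+1).choose (a+b) : ℤ)
    have hK : ((x:ℤ) + 1 - m) ≠ 0 := by
      have : (m:ℤ) ≤ x := by exact_mod_cast hmx
      omega
    apply mul_left_cancel₀ hK
    linear_combination (-(((x:ℤ)+1)^2 - m^2))*u*v * e3
      + ((x:ℤ)+1-m)*w*(m+1)*V * e1 + ((x:ℤ)+1-m)*w*((a:ℤ)-m)*u * e2

/-- The PS sum. -/
def PSsum (a b y : ℕ) : ℕ :=
  ∑ m ∈ range (a+1), a.choose m * b.choose m * (y+a+b-m).choose (a+b)

lemma PS_rec (a b x : ℕ) :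
    (x+1)^2 * PSsum a b (x+1) = (x+a+1)*(x+b+1) * PSsum a b x := by
  have hsum := Finset.sum_congr rfl (fun m (_ : m ∈ range (a+1)) => T1 a b x m)
  rw [Finset.sum_add_distrib, Finset.sum_add_distrib] at hsum
  set g : ℕ → ℕ := fun m =>
    m^2 * (a.choose m * b.choose m * (x+1+a+b-m).choose (a+b)) with hg
  have h2 : (∑ m ∈ range (a+1),
      (m+1)^2 * (a.choose (m+1) * b.choose (m+1) * (x+a+b-m).choose (a+b)))
      = ∑ m ∈ range (a+1), g (m+1) := by
    apply Finset.sum_congr rfl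
    intro m _
    have : x+1+a+b-(m+1) = x+a+b-m := by omega
    simp only [hg, this]
  rw [h2] at hsum
  have h3 : ∑ m ∈ range (a+1), g (m+1) = ∑ m ∈ range (a+1), g m := by
    have h4 := Finset.sum_range_succ' g (a+1)
    have h5 := Finset.sum_range_succ g (a+1)
    have hg0 : g 0 = 0 := by simp [hg]
    have hga : g (a+1) = 0 := by
      simp [hg, Nat.choose_eq_zero_of_lt (Nat.lt_succ_self a)]
    omega
  rw [h3] at hsum
  have hL : (∑ m ∈ range (a+1),
      (x+1)^2 * (a.choose m * b.choose m * (x+1+a+b-m).choose (a+b))) =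
      (x+1)^2 * PSsum a b (x+1) := by
    rw [PSsum, Finset.mul_sum]
  have hR : (∑ m ∈ range (a+1),
      (x+a+1)*(x+b+1) * (a.choose m * b.choose m * (x+a+b-m).choose (a+b))) =
      (x+a+1)*(x+b+1) * PSsum a b x := by
    rw [PSsum, Finset.mul_sum]
  rw [hL, hR] at hsum
  exact Nat.add_right_cancel hsum

lemma aux_absorb (y c : ℕ) : (y+c+1) * (y+c).choose c = (y+1) * (y+c+1).choose c := by
  have h := Nat.add_one_mul_choose_eq (y+c) y
  have h1 : (y+c).choose y = (y+c).choose c := Nat.choose_symm_add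
  have h2 : (y+c+1).choose (y+1) = (y+c+1).choose c :=
    Nat.choose_symm_of_eq_add (by omega)
  simp only [Nat.succ_eq_add_one, h1, h2] at h
  rw [h, Nat.mul_comm]

/-- Pfaff–Saalschütz. -/
lemma PS (a b x : ℕ) : PSsum a b x = (x+a).choose a * (x+b).choose b := by
  induction x with
  | zero =>
    rw [PSsum]
    rw [Finset.sum_eq_single 0]
    · simp
    · intro m hmem hm
      have hma : m ≤ a := Nat.lt_succ_iff.mp (Finset.mem_range.mp hmem)
      have : 1 ≤ m := Nat.one_le_iff_ne_zero.mpr hm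
      rw [Nat.choose_eq_zero_of_lt (show 0+a+b-m < a+b by omega)]
      ring
    · intro h
      exact absurd (Finset.mem_range.mpr (Nat.succ_pos a)) h
  | succ x ih =>
    have h := PS_rec a b x
    rw [ih] at h
    have ha := aux_absorb x a
    have hb := aux_absorb x b
    have key : (x+a+1)*(x+b+1) * ((x+a).choose a * (x+b).choose b)
        = (x+1)^2 * ((x+1+a).choose a * (x+1+b).choose b) := by
      have : (x+a+1) * (x+a).choose a * ((x+b+1) * (x+b).choose b)
          = (x+1) * (x+a+1).choose a * ((x+1) * (x+b+1).choose b) := by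
        rw [ha, hb]
      calc (x+a+1)*(x+b+1) * ((x+a).choose a * (x+b).choose b)
          = (x+a+1) * (x+a).choose a * ((x+b+1) * (x+b).choose b) := by ring
        _ = (x+1) * (x+a+1).choose a * ((x+1) * (x+b+1).choose b) := this
        _ = (x+1)^2 * ((x+1+a).choose a * (x+1+b).choose b) := by
            rw [show x+1+a = x+a+1 by omega, show x+1+b = x+b+1 by omega]; ring
    rw [key] at h
    exact Nat.eq_of_mul_eq_mul_left (by positivity) h

lemma A1 (n j : ℕ) (hj : j ≤ n) :
    ∑ k ∈ range (n+1), n.choose k ^ 2 * k.choose j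
      = n.choose j * ((n-j) + n).choose n := by
  rw [← Finset.sum_range_reflect]
  simp only [Nat.add_sub_cancel]
  have step : ∀ m ∈ range (n+1),
      n.choose (n-m) ^ 2 * (n-m).choose j
        = n.choose j * ((n-j).choose m * n.choose (n-m)) := by
    intro m hm
    have hmn : m ≤ n := Nat.lt_succ_iff.mp (Finset.mem_range.mp hm)
    have := chain n m j hmn
    calc n.choose (n-m) ^ 2 * (n-m).choose j
        = (n.choose (n-m) * (n-m).choose j) * n.choose (n-m) := by ring
      _ = (n.choose j * (n-j).choose m) * n.choose (n-m) := by rw [this]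
      _ = n.choose j * ((n-j).choose m * n.choose (n-m)) := by ring
  rw [Finset.sum_congr rfl step, ← Finset.mul_sum]
  congr 1
  have hv := vand_range (n-j) n n
  rw [← hv]

lemma innerPS (n j : ℕ) (hj : j ≤ n) :
    ∑ k ∈ range (n+1), n.choose k ^ 2 * (n+k).choose k * (k.choose j * k.choose (n-j))
      = n.choose j ^ 2 * (((n-j) + n).choose n * (n+j).choose n) := by
  rw [← Finset.sum_range_reflect]
  simp only [Nat.add_sub_cancel]
  have step : ∀ m ∈ range (n+1),
      n.choose (n-m) ^ 2 * (n+(n-m)).choose (n-m) *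
          ((n-m).choose j * (n-m).choose (n-j))
        = n.choose j ^ 2 *
          ((n-j).choose m * j.choose m * (n+(n-j)+j-m).choose ((n-j)+j)) := by
    intro m hm
    have hmn : m ≤ n := Nat.lt_succ_iff.mp (Finset.mem_range.mp hm)
    have c1 := chain n m j hmn
    have c2 := chain n m (n-j) hmn
    rw [show n-(n-j) = j by omega, Nat.choose_symm hj] at c2
    have hsymm : (n+(n-m)).choose (n-m) = (n+(n-m)).choose n :=
      (Nat.choose_symm_add).symm
    have hidx : n+(n-j)+j-m = n+(n-m) := by omega
    have hbot : (n-j)+j = n := by omega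
    rw [hsymm, hidx, hbot]
    calc n.choose (n-m) ^ 2 * (n+(n-m)).choose n * ((n-m).choose j * (n-m).choose (n-j))
        = (n.choose (n-m) * (n-m).choose j) * (n.choose (n-m) * (n-m).choose (n-j))
            * (n+(n-m)).choose n := by ring
      _ = (n.choose j * (n-j).choose m) * (n.choose j * j.choose m)
            * (n+(n-m)).choose n := by rw [c1, c2]
      _ = n.choose j ^ 2 * ((n-j).choose m * j.choose m * (n+(n-m)).choose n) := by ring
  rw [Finset.sum_congr rfl step, ← Finset.mul_sum]
  congr 1
  have htrim : ∑ m ∈ range (n+1),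
      (n-j).choose m * j.choose m * (n+(n-j)+j-m).choose ((n-j)+j)
      = ∑ m ∈ range ((n-j)+1),
      (n-j).choose m * j.choose m * (n+(n-j)+j-m).choose ((n-j)+j) := by
    symm
    apply Finset.sum_subset (Finset.range_subset_range.mpr (by omega))
    intro m _ hm
    have : n-j < m := by
      rcases Nat.lt_or_ge (n-j) m with h | h
      · exact h
      · exact absurd (Finset.mem_range.mpr (by omega)) hm
    rw [Nat.choose_eq_zero_of_lt this]
    ring
  rw [htrim]
  have hps := PS (n-j) j n
  rw [PSsum] at hps
  rw [hps, show n+j = j+n by omega,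
    show (n+(n-j)).choose (n-j) = (n+(n-j)).choose n from (Nat.choose_symm_add).symm,
    show (j+n).choose j = (j+n).choose n from Nat.choose_symm_add]
  rw [show (n-j)+n = n+(n-j) by omega]

/-- Case #26: ∑_{k=0}^n C(n,k)^2 C(n+k,k) C(2k,n) = ∑_{k,l=0}^n C(n,k)^2 C(n,l)^2 C(k+l,n). -/
theorem stmt_8 (n : ℕ) :
    (∑ k ∈ Finset.range (n + 1),
      (n.choose k) ^ 2 * Nat.choose (n + k) k * Nat.choose (2 * k) n) =
    ∑ k ∈ Finset.range (n + 1), ∑ l ∈ Finset.range (n + 1),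
      (n.choose k) ^ 2 * (n.choose l) ^ 2 * Nat.choose (k + l) n := by
  have hL : (∑ k ∈ range (n + 1),
      (n.choose k) ^ 2 * Nat.choose (n + k) k * Nat.choose (2 * k) n)
      = ∑ j ∈ range (n+1), n.choose j ^ 2 * (((n-j) + n).choose n * (n+j).choose n) := by
    have e1 : ∀ k ∈ range (n+1),
        (n.choose k) ^ 2 * Nat.choose (n + k) k * Nat.choose (2 * k) n
        = ∑ j ∈ range (n+1),
            n.choose k ^ 2 * (n+k).choose k * (k.choose j * k.choose (n-j)) := by
      intro k _
      rw [two_mul, ← vand_range k k n, Finset.mul_sum]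
    rw [Finset.sum_congr rfl e1, Finset.sum_comm]
    apply Finset.sum_congr rfl
    intro j hj
    exact innerPS n j (Nat.lt_succ_iff.mp (Finset.mem_range.mp hj))
  have hR : (∑ k ∈ range (n + 1), ∑ l ∈ range (n + 1),
      (n.choose k) ^ 2 * (n.choose l) ^ 2 * Nat.choose (k + l) n)
      = ∑ j ∈ range (n+1), n.choose j ^ 2 * (((n-j) + n).choose n * (n+j).choose n) := by
    have e1 : ∀ k ∈ range (n+1), (∑ l ∈ range (n+1),
        (n.choose k) ^ 2 * (n.choose l) ^ 2 * Nat.choose (k + l) n)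
        = ∑ j ∈ range (n+1), ∑ l ∈ range (n+1),
            (n.choose k ^ 2 * k.choose j) * (n.choose l ^ 2 * l.choose (n-j)) := by
      intro k _
      have e2 : ∀ l ∈ range (n+1),
          (n.choose k) ^ 2 * (n.choose l) ^ 2 * Nat.choose (k + l) n
          = ∑ j ∈ range (n+1),
              (n.choose k ^ 2 * k.choose j) * (n.choose l ^ 2 * l.choose (n-j)) := by
        intro l _
        rw [← vand_range k l n, Finset.mul_sum]
        apply Finset.sum_congr rfl
        intro j _
        ring
      rw [Finset.sum_congr rfl e2, Finset.sum_comm]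
    rw [Finset.sum_congr rfl e1, Finset.sum_comm]
    apply Finset.sum_congr rfl
    intro j hj
    have hjn : j ≤ n := Nat.lt_succ_iff.mp (Finset.mem_range.mp hj)
    rw [← Finset.sum_mul_sum, A1 n j hjn, A1 n (n-j) (by omega),
        show n-(n-j) = j by omega, Nat.choose_symm hjn,
        show j + n = n + j by omega]
    ring
  rw [hL, hR]
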